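/- arXiv:1610.04295 — 2 statements merged into one kernel-verified Lean document; each statement's English description precedes it below -/
import Mathlib

section
/- Let k be a positive integer and s ≥ 1 an integer. Then ρ_{k,0}(2^s) = Σ_{i=0}^{⌊(s−1)/2⌋−1} 2^{ki + (s−2i−3)(k−1)} · ρ^(1)_{k,0}(8) + 2^{⌊(s−1)/2⌋·k} · ρ^(1)_{k,0}(2^{s−2⌊(s−1)/2⌋}) + 2^{⌊s/2⌋·k}, where the sum is empty when ⌊(s−1)/2⌋ = 0. -/
open Finset

section helpers

lemma card_comp {α β : Type*} [Fintype α] [Fintype β] (f : α → β) (c : ℕ)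
    (hc : ∀ b : β, (∃ a, f a = b) → Nat.card {a // f a = b} = c) (P : β → Prop) :
    Nat.card {a // P (f a)} = c * Nat.card {b // P b ∧ ∃ a, f a = b} := by
  classical
  simp only [Nat.card_eq_fintype_card, Fintype.card_subtype]
  rw [Finset.card_eq_sum_card_fiberwise (f := f)
      (t := univ.filter (fun b => P b ∧ ∃ a, f a = b))
      (fun a ha => by
        simp only [Finset.mem_coe, mem_filter, mem_univ, true_and] at ha ⊢
        exact ⟨ha, a, rfl⟩)]
  rw [Finset.sum_congr rfl (fun b hb => ?_), Finset.sum_const, smul_eq_mul, mul_comm]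
  simp only [mem_filter, mem_univ, true_and] at hb
  have h2 : (univ.filter (fun a => P (f a))).filter (fun a => f a = b)
      = univ.filter (fun a => f a = b) := by
    ext a; simp only [mem_filter, mem_univ, true_and, and_iff_right_iff_imp]
    rintro rfl; exact hb.1
  rw [h2]
  have := hc b hb.2
  simpa [Nat.card_eq_fintype_card, Fintype.card_subtype] using this

lemma card_split {α : Type*} [Fintype α] (P Q : α → Prop) :
    Nat.card {a // P a} = Nat.card {a // P a ∧ Q a} + Nat.card {a // P a ∧ ¬ Q a} := by
  classical
  simp only [Nat.card_eq_fintype_card, Fintype.card_subtype]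
  rw [← Finset.filter_filter, ← Finset.filter_filter,
    Finset.card_filter_add_card_filter_not]

noncomputable def fiberEquivKer {M N : Type*} [AddCommGroup M] [AddCommGroup N] (f : M →+ N)
    (b : N) (a₀ : M) (h : f a₀ = b) : {a // f a = b} ≃ {a // f a = 0} where
  toFun a := ⟨a.1 - a₀, by simp [map_sub, a.2, h]⟩
  invFun a := ⟨a.1 + a₀, by simp [map_add, a.2, h]⟩
  left_inv a := by simp
  right_inv a := by simp

lemma card_fiber_pi {k : ℕ} {M N : Type*} [AddCommGroup M] [AddCommGroup N] [Fintype M]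
    [Fintype N] (f : M →+ N) (c : ℕ) (hker : Nat.card {z : M // f z = 0} = c) (b : Fin k → N)
    (hb : ∃ y : Fin k → M, (fun i => f (y i)) = b) :
    Nat.card {y : Fin k → M // (fun i => f (y i)) = b} = c ^ k := by
  obtain ⟨y₀, hy₀⟩ := hb
  have e1 : {y : Fin k → M // (fun i => f (y i)) = b} ≃ {y : Fin k → M // ∀ i, f (y i) = b i} :=
    Equiv.subtypeEquivRight (fun y => funext_iff)
  have e2 := Equiv.subtypePiEquivPi (p := fun (i : Fin k) (z : M) => f z = b i)
  rw [Nat.card_congr (e1.trans e2), Nat.card_pi]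
  have h3 : ∀ i, Nat.card {z : M // f z = b i} = c := fun i => by
    rw [Nat.card_congr (fiberEquivKer f (b i) (y₀ i) (congrFun hy₀ i))]; exact hker
  simp [h3]

lemma zmod_eq_natCast_val {n : ℕ} [NeZero n] (z : ZMod n) : z = ((z.val : ℕ) : ZMod n) := by
  simp [ZMod.natCast_val, ZMod.cast_id]

lemma sum_sq_natCast {k n : ℕ} [NeZero n] (x : Fin k → ZMod n) :
    ∑ i, x i ^ 2 = ((∑ i, (x i).val ^ 2 : ℕ) : ZMod n) := by
  push_cast
  simp [ZMod.natCast_val, ZMod.cast_id]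

lemma sum_sq_eq_zero_iff {k n : ℕ} [NeZero n] (x : Fin k → ZMod n) :
    ∑ i, x i ^ 2 = 0 ↔ n ∣ ∑ i, (x i).val ^ 2 := by
  rw [sum_sq_natCast, ZMod.natCast_eq_zero_iff]

lemma two_dvd_iff {n : ℕ} [NeZero n] (hn : 2 ∣ n) (z : ZMod n) :
    (2 : ZMod n) ∣ z ↔ 2 ∣ z.val := by
  constructor
  · rintro ⟨c, rfl⟩
    have h1 : (2 : ZMod n) * c = ((2 * c.val : ℕ) : ZMod n) := by
      push_cast; rw [← zmod_eq_natCast_val]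
    rw [h1, ZMod.val_natCast]
    exact (Nat.dvd_mod_iff hn).mpr ⟨c.val, rfl⟩
  · rintro ⟨d, hd⟩
    refine ⟨(d : ZMod n), ?_⟩
    rw [zmod_eq_natCast_val z, hd]; push_cast; ring

lemma card_ker_two_mul (s : ℕ) (hs : 1 ≤ s) :
    Nat.card {z : ZMod (2^s) // 2 * z = 0} = 2 := by
  classical
  have : NeZero (2^s) := ⟨by positivity⟩
  have h0 : ∀ z : ZMod (2^s), 2 * z = 0 ↔ z = 0 ∨ z = ((2^(s-1) : ℕ) : ZMod (2^s)) := by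
    intro z
    constructor
    · intro h
      have h1 : (2 : ZMod (2^s)) * z = ((2 * z.val : ℕ) : ZMod (2^s)) := by
        push_cast; rw [← zmod_eq_natCast_val]
      rw [h1, ZMod.natCast_eq_zero_iff] at h
      have h2 : 2^(s-1) ∣ z.val := by
        have : 2 * 2^(s-1) ∣ 2 * z.val := by
          rwa [show 2 * 2^(s-1) = 2^s by rw [← pow_succ']; congr 1; omega]
        exact (Nat.mul_dvd_mul_iff_left (by norm_num)).mp this
      obtain ⟨t, ht⟩ := h2
      have hlt : z.val < 2^s := ZMod.val_lt z
      have hlt2 : 2^(s-1) * t < 2^(s-1) * 2 := by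
        rw [← ht]
        calc z.val < 2^s := hlt
        _ = 2^(s-1) * 2 := by rw [mul_comm, ← pow_succ']; congr 1; omega
      have ht2 : t < 2 := lt_of_mul_lt_mul_left hlt2 (Nat.zero_le _)
      interval_cases t
      · left; rw [zmod_eq_natCast_val z, ht]; simp
      · right; rw [zmod_eq_natCast_val z, ht, mul_one]
    · rintro (rfl | rfl)
      · ring
      · have : (2 : ZMod (2^s)) * ((2^(s-1) : ℕ) : ZMod (2^s)) = ((2^s : ℕ) : ZMod (2^s)) := by
          push_cast
          rw [show (2:ZMod (2^s))^s = 2 * 2^(s-1) by rw [← pow_succ']; congr 1; omega]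
        rw [this, ZMod.natCast_self]
  rw [Nat.card_eq_fintype_card, Fintype.card_subtype]
  have hfil : univ.filter (fun z : ZMod (2^s) => 2 * z = 0)
      = {0, ((2^(s-1) : ℕ) : ZMod (2^s))} := by
    ext z; simp [h0]
  rw [hfil, Finset.card_insert_of_notMem, Finset.card_singleton]
  simp only [Finset.mem_singleton]
  intro h
  have : ((2^(s-1) : ℕ) : ZMod (2^s)).val = 2^(s-1) :=
    ZMod.val_cast_of_lt (Nat.pow_lt_pow_right (by norm_num) (by omega))
  rw [← h] at this
  simp at this
  exact absurd this.symm (by positivity)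

lemma castHom_eq_zero_iff {a b : ℕ} (h : b ≤ a) (z : ZMod (2^a)) :
    ZMod.castHom (pow_dvd_pow 2 h) (ZMod (2^b)) z = 0 ↔ 2^b ∣ z.val := by
  have : NeZero (2^a) := ⟨by positivity⟩
  rw [ZMod.castHom_apply, ← ZMod.natCast_val, ZMod.natCast_eq_zero_iff]

lemma card_ker_cast {a b : ℕ} (h : b ≤ a) :
    Nat.card {z : ZMod (2^a) // ZMod.castHom (pow_dvd_pow 2 h) (ZMod (2^b)) z = 0}
      = 2^(a-b) := by
  have : NeZero (2^a) := ⟨by positivity⟩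
  have key : ∀ z : ZMod (2^a),
      (ZMod.castHom (pow_dvd_pow 2 h) (ZMod (2^b)) z = 0) ↔ 2^b ∣ z.val :=
    castHom_eq_zero_iff h
  have e : {z : ZMod (2^a) // ZMod.castHom (pow_dvd_pow 2 h) (ZMod (2^b)) z = 0}
      ≃ Fin (2^(a-b)) := by
    refine ⟨fun z => ⟨z.1.val / 2^b, ?_⟩, fun t => ⟨((2^b * t.1 : ℕ) : ZMod (2^a)), ?_⟩, ?_, ?_⟩
    · have hlt : z.1.val < 2^a := ZMod.val_lt z.1
      apply Nat.div_lt_of_lt_mul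
      calc z.1.val < 2^a := hlt
      _ = 2^b * 2^(a-b) := by rw [← pow_add]; congr 1; omega
    · rw [key]
      have htlt : 2^b * t.1 < 2^a := by
        calc 2^b * t.1 < 2^b * 2^(a-b) := by
              exact mul_lt_mul_of_pos_left t.2 (pow_pos two_pos b)
        _ = 2^a := by rw [← pow_add]; congr 1; omega
      rw [ZMod.val_cast_of_lt htlt]
      exact Dvd.intro _ rfl
    · rintro ⟨z, hz⟩
      rw [key] at hz
      ext
      simp only
      rw [Nat.mul_div_cancel' hz, ← zmod_eq_natCast_val]
    · rintro ⟨t, ht⟩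
      ext
      simp only
      have htlt : 2^b * t < 2^a := by
        calc 2^b * t < 2^b * 2^(a-b) := by
              exact mul_lt_mul_of_pos_left ht (pow_pos two_pos b)
        _ = 2^a := by rw [← pow_add]; congr 1; omega
      rw [ZMod.val_cast_of_lt htlt, Nat.mul_div_cancel_left _ (by positivity)]
  rw [Nat.card_congr e, Nat.card_eq_fintype_card, Fintype.card_fin]

lemma sq_modEq {m a b : ℕ} (hm : 1 ≤ m) (h : a ≡ b [MOD 2^m]) :
    a^2 ≡ b^2 [MOD 2^(m+1)] := by
  rw [Nat.modEq_iff_dvd] at h ⊢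
  push_cast at h ⊢
  have h1 : (2:ℤ) ∣ (b:ℤ) - (a:ℤ) := dvd_trans (dvd_pow_self 2 (by omega)) h
  obtain ⟨t, ht⟩ := h1
  have h2 : (2:ℤ) ∣ (b:ℤ) + (a:ℤ) := ⟨t + a, by linarith⟩
  calc ((2:ℤ)^(m+1)) = 2^m * 2 := by ring
  _ ∣ ((b:ℤ) - a) * ((b:ℤ) + a) := mul_dvd_mul h h2
  _ = (b:ℤ)^2 - (a:ℤ)^2 := by ring

lemma S_cast {k m : ℕ} (hm : 1 ≤ m) (x : Fin k → ZMod (2^(m+1))) :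
    ((∑ i, ((ZMod.castHom (pow_dvd_pow 2 (Nat.le_succ m)) (ZMod (2^m)) (x i)).val)^2 : ℕ) :
      ZMod (2^(m+1))) = ∑ i, x i ^ 2 := by
  have : NeZero (2^(m+1)) := ⟨by positivity⟩
  have : NeZero (2^m) := ⟨by positivity⟩
  rw [show (∑ i, x i ^ 2) = ((∑ i, (x i).val ^ 2 : ℕ) : ZMod (2^(m+1))) by
    push_cast; simp [ZMod.natCast_val, ZMod.cast_id]]
  push_cast
  refine Finset.sum_congr rfl (fun i _ => ?_)
  rw [← Nat.cast_pow, ← Nat.cast_pow, ZMod.natCast_eq_natCast_iff]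
  apply sq_modEq hm
  rw [ZMod.castHom_apply, ← ZMod.natCast_val, ZMod.val_natCast]
  exact Nat.mod_modEq _ _

end helpers
/-- `rho k lam n` is the number of `k`-tuples `(x₁,…,x_k) ∈ (ℤ/nℤ)^k` with
`x₁² + ⋯ + x_k² ≡ lam (mod n)`. -/
noncomputable def rho (k : ℕ) (lam : ℤ) (n : ℕ) : ℕ :=
  Nat.card {x : Fin k → ZMod n // ∑ i, x i ^ 2 = (lam : ZMod n)}

/-- `rho1 k lam p s` is the number of `k`-tuples `(x₁,…,x_k) ∈ (ℤ/p^sℤ)^k` with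
`x₁² + ⋯ + x_k² ≡ lam (mod p^s)` such that `p ∤ xᵢ` for at least one index `i`. -/
noncomputable def rho1 (k : ℕ) (lam : ℤ) (p s : ℕ) : ℕ :=
  Nat.card {x : Fin k → ZMod (p ^ s) //
    (∑ i, x i ^ 2 = (lam : ZMod (p ^ s))) ∧ ∃ i, ¬ (p : ZMod (p ^ s)) ∣ x i}

lemma rho_one (k : ℕ) : rho k 0 1 = 1 := by
  unfold rho
  have e : {x : Fin k → ZMod 1 // ∑ i, x i ^ 2 = ((0:ℤ) : ZMod 1)} ≃ (Fin k → ZMod 1) :=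
    Equiv.subtypeUnivEquiv (fun x => Subsingleton.elim _ _)
  rw [Nat.card_congr e, Nat.card_pi]
  simp

lemma rho_split (k s : ℕ) :
    rho k 0 (2^s) = rho1 k 0 2 s
      + Nat.card {x : Fin k → ZMod (2^s) //
          (∑ i, x i ^ 2 = 0) ∧ ∀ i, (2 : ZMod (2^s)) ∣ x i} := by
  unfold rho rho1
  push_cast
  rw [card_split (fun x : Fin k → ZMod (2^s) => ∑ i, x i ^ 2 = 0)
    (fun x => ∃ i, ¬ (2 : ZMod (2^s)) ∣ x i)]
  congr 1
  apply Nat.card_congr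
  apply Equiv.subtypeEquivRight
  intro x
  constructor
  · rintro ⟨h1, h2⟩; push_neg at h2; exact ⟨h1, h2⟩
  · rintro ⟨h1, h2⟩; exact ⟨h1, by push_neg; exact h2⟩

lemma card_even (k s : ℕ) (hs : 2 ≤ s) :
    Nat.card {x : Fin k → ZMod (2^s) //
        (∑ i, x i ^ 2 = 0) ∧ ∀ i, (2 : ZMod (2^s)) ∣ x i}
      = 2^k * rho k 0 (2^(s-2)) := by
  classical
  have hns : NeZero (2^s) := ⟨by positivity⟩
  have hns2 : NeZero (2^(s-2)) := ⟨by positivity⟩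
  have hle : s - 2 ≤ s := by omega
  -- step 1 : doubling map
  have hc1 : ∀ b : Fin k → ZMod (2^s),
      (∃ y : Fin k → ZMod (2^s), (fun i => 2 * y i) = b) →
      Nat.card {y : Fin k → ZMod (2^s) // (fun i => 2 * y i) = b} = 2^k := by
    intro b hb
    have := card_fiber_pi (AddMonoidHom.mulLeft (2 : ZMod (2^s))) 2
      (by simpa using card_ker_two_mul s (le_trans one_le_two hs)) b (by simpa using hb)
    simpa using this
  have step1 := card_comp (fun (y : Fin k → ZMod (2^s)) (i : Fin k) => 2 * y i) (2^k) hc1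
    (fun x : Fin k → ZMod (2^s) => (∑ i, x i ^ 2 = 0) ∧ ∀ i, (2 : ZMod (2^s)) ∣ x i)
  -- identify the target of step1 with the even-solution set
  have e1 : {b : Fin k → ZMod (2^s) //
        ((∑ i, b i ^ 2 = 0) ∧ ∀ i, (2 : ZMod (2^s)) ∣ b i) ∧
          ∃ y : Fin k → ZMod (2^s), (fun i => 2 * y i) = b}
      ≃ {b : Fin k → ZMod (2^s) // (∑ i, b i ^ 2 = 0) ∧ ∀ i, (2 : ZMod (2^s)) ∣ b i} := by
    apply Equiv.subtypeEquivRight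
    intro b
    refine ⟨fun h => h.1, fun h => ⟨h, ?_⟩⟩
    have := h.2
    choose c hc using this
    exact ⟨c, funext fun i => (hc i).symm⟩
  rw [Nat.card_congr e1] at step1
  -- simplify the source of step1
  have e2 : {y : Fin k → ZMod (2^s) //
        (∑ i, (2 * y i) ^ 2 = 0) ∧ ∀ i, (2 : ZMod (2^s)) ∣ 2 * y i}
      ≃ {y : Fin k → ZMod (2^s) // ∑ i, (2 * y i) ^ 2 = 0} := by
    apply Equiv.subtypeEquivRight
    intro y
    simp only [and_iff_left_iff_imp]
    exact fun _ i => Dvd.intro _ rfl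
  rw [Nat.card_congr e2] at step1
  -- rewrite the doubled condition via cast down two levels
  have key : ∀ y : Fin k → ZMod (2^s), (∑ i, (2 * y i) ^ 2 = 0)
      ↔ ∑ i, (ZMod.castHom (pow_dvd_pow 2 hle) (ZMod (2^(s-2))) (y i)) ^ 2 = 0 := by
    intro y
    have l1 : ∑ i, (2 * y i) ^ 2 = ((4 * ∑ i, (y i).val ^ 2 : ℕ) : ZMod (2^s)) := by
      have h5 : ∑ i, (2 * y i) ^ 2 = 4 * ∑ i, y i ^ 2 := by
        rw [Finset.mul_sum]; exact Finset.sum_congr rfl fun i _ => by ring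
      rw [h5, sum_sq_natCast]; push_cast; ring
    have r1 : ∑ i, (ZMod.castHom (pow_dvd_pow 2 hle) (ZMod (2^(s-2))) (y i)) ^ 2
        = ((∑ i, (y i).val ^ 2 : ℕ) : ZMod (2^(s-2))) := by
      push_cast
      refine Finset.sum_congr rfl fun i _ => ?_
      rw [ZMod.castHom_apply, ← ZMod.natCast_val]
    rw [l1, r1, ZMod.natCast_eq_zero_iff, ZMod.natCast_eq_zero_iff]
    obtain ⟨V, hV⟩ : ∃ V, ∑ i, (y i).val ^ 2 = V := ⟨_, rfl⟩
    rw [hV]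
    have h43 : 2 + (s - 2) = s := Nat.add_sub_cancel' hs
    have h4 : 2^s = 4 * 2^(s-2) := by
      calc 2^s = 2^(2+(s-2)) := by rw [h43]
      _ = 2^2 * 2^(s-2) := pow_add 2 2 (s-2)
      _ = 4 * 2^(s-2) := by norm_num
    rw [h4]
    exact Nat.mul_dvd_mul_iff_left (show 0 < 4 by norm_num)
  have e3 : {y : Fin k → ZMod (2^s) // ∑ i, (2 * y i) ^ 2 = 0}
      ≃ {y : Fin k → ZMod (2^s) //
          (fun z : Fin k → ZMod (2^(s-2)) => ∑ i, z i ^ 2 = 0)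
            (fun i => ZMod.castHom (pow_dvd_pow 2 hle) (ZMod (2^(s-2))) (y i))} :=
    Equiv.subtypeEquivRight (fun y => key y)
  -- step 2 : counting via the cast map
  have hc2 : ∀ b : Fin k → ZMod (2^(s-2)),
      (∃ y : Fin k → ZMod (2^s),
        (fun i => ZMod.castHom (pow_dvd_pow 2 hle) (ZMod (2^(s-2))) (y i)) = b) →
      Nat.card {y : Fin k → ZMod (2^s) //
        (fun i => ZMod.castHom (pow_dvd_pow 2 hle) (ZMod (2^(s-2))) (y i)) = b} = (2^2)^k := by
    intro b hb
    have hker0 : Nat.card {z : ZMod (2^s) //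
        ZMod.castHom (pow_dvd_pow 2 hle) (ZMod (2^(s-2))) z = 0} = 2^2 := by
      rw [card_ker_cast hle]
      have h44 : s - (s - 2) = 2 := Nat.sub_sub_self hs
      exact congrArg (2 ^ ·) h44
    have := card_fiber_pi (ZMod.castHom (pow_dvd_pow 2 hle) (ZMod (2^(s-2)))).toAddMonoidHom
      (2^2) (by simpa using hker0) b (by simpa using hb)
    simpa using this
  have step2 := card_comp
    (fun (y : Fin k → ZMod (2^s)) (i : Fin k) =>
      ZMod.castHom (pow_dvd_pow 2 hle) (ZMod (2^(s-2))) (y i)) ((2^2)^k) hc2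
    (fun z : Fin k → ZMod (2^(s-2)) => ∑ i, z i ^ 2 = 0)
  -- identify the target of step2 with rho
  have e4 : {b : Fin k → ZMod (2^(s-2)) //
      (∑ i, b i ^ 2 = 0) ∧ ∃ y : Fin k → ZMod (2^s),
        (fun i => ZMod.castHom (pow_dvd_pow 2 hle) (ZMod (2^(s-2))) (y i)) = b}
      ≃ {b : Fin k → ZMod (2^(s-2)) // ∑ i, b i ^ 2 = ((0:ℤ) : ZMod (2^(s-2)))} := by
    apply Equiv.subtypeEquivRight
    intro b
    push_cast
    constructor
    · exact fun h => h.1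
    · intro h
      refine ⟨h, ⟨fun i => (((b i).val : ℕ) : ZMod (2^s)), funext fun i => ?_⟩⟩
      rw [map_natCast, ← zmod_eq_natCast_val]
  rw [Nat.card_congr e3, step2, Nat.card_congr e4] at step1
  have hrho : Nat.card {b : Fin k → ZMod (2^(s-2)) //
      ∑ i, b i ^ 2 = ((0:ℤ) : ZMod (2^(s-2)))} = rho k 0 (2^(s-2)) := rfl
  rw [hrho] at step1
  have harith : (2^2)^k = 2^k * 2^k := by
    rw [← pow_mul, two_mul, pow_add]
  rw [harith, mul_assoc] at step1
  exact (Nat.eq_of_mul_eq_mul_left (pow_pos two_pos k) step1).symm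
section TauMachinery
open scoped Classical

noncomputable def c0 (m : ℕ) : ZMod (2^m) := ((2^(m-1) : ℕ) : ZMod (2^m))

lemma c0_even (m : ℕ) (hm : 2 ≤ m) : (2 : ZMod (2^m)) ∣ c0 m := by
  refine ⟨((2^(m-2) : ℕ) : ZMod (2^m)), ?_⟩
  rw [c0]
  have h : (2^(m-1) : ℕ) = 2 * 2^(m-2) := by
    have h2 : m - 2 + 1 = m - 1 := by omega
    rw [← h2, pow_succ']
  rw [h]; push_cast; ring

lemma c0_add_self (m : ℕ) (hm : 1 ≤ m) : c0 m + c0 m = 0 := by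
  rw [c0, ← Nat.cast_add]
  have h : (2^(m-1) + 2^(m-1) : ℕ) = 2^m := by
    have h1 : (2^(m-1) + 2^(m-1) : ℕ) = 2^(m-1) * 2 := by ring
    have h2 : m - 1 + 1 = m := by omega
    rw [h1, ← pow_succ, h2]
  rw [h, ZMod.natCast_self]

lemma c0_sq (m : ℕ) (hm : 2 ≤ m) : c0 m ^ 2 = 0 := by
  rw [c0, ← Nat.cast_pow, ← pow_mul]
  have h : (m-1) * 2 = m + (m - 2) := by omega
  rw [h, pow_add, Nat.cast_mul, ZMod.natCast_self, zero_mul]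

lemma c0_two_mul (m : ℕ) (hm : 1 ≤ m) : 2 * c0 m = 0 := by
  rw [two_mul, c0_add_self m hm]

lemma c0_val (m : ℕ) (hm : 1 ≤ m) : (c0 m).val = 2^(m-1) := by
  haveI : NeZero (2^m) := ⟨by positivity⟩
  exact ZMod.val_cast_of_lt (Nat.pow_lt_pow_right one_lt_two (by omega))

noncomputable def jIdx {k m : ℕ} (hk : 0 < k) (b : Fin k → ZMod (2^m)) : Fin k :=
  if h : (Finset.univ.filter (fun i => ¬ (2 : ZMod (2^m)) ∣ b i)).Nonempty
  then (Finset.univ.filter (fun i => ¬ (2 : ZMod (2^m)) ∣ b i)).min' h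
  else ⟨0, hk⟩

noncomputable def tauF {k m : ℕ} (hk : 0 < k) (b : Fin k → ZMod (2^m)) : Fin k → ZMod (2^m) :=
  Function.update b (jIdx hk b) (b (jIdx hk b) + c0 m)

lemma filter_nonempty {k m : ℕ} (b : Fin k → ZMod (2^m))
    (hE : ∃ i, ¬ (2 : ZMod (2^m)) ∣ b i) :
    (Finset.univ.filter (fun i => ¬ (2 : ZMod (2^m)) ∣ b i)).Nonempty := by
  obtain ⟨i, hi⟩ := hE; exact ⟨i, by simp [hi]⟩

lemma jIdx_odd {k m : ℕ} (hk : 0 < k) (b : Fin k → ZMod (2^m))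
    (hE : ∃ i, ¬ (2 : ZMod (2^m)) ∣ b i) : ¬ (2 : ZMod (2^m)) ∣ b (jIdx hk b) := by
  rw [jIdx, dif_pos (filter_nonempty b hE)]
  have := Finset.min'_mem _ (filter_nonempty b hE)
  simp only [Finset.mem_filter] at this
  exact this.2

lemma tauF_apply_j {k m : ℕ} (hk : 0 < k) (b : Fin k → ZMod (2^m)) :
    tauF hk b (jIdx hk b) = b (jIdx hk b) + c0 m := by
  rw [tauF, Function.update_self]

lemma tauF_apply_ne {k m : ℕ} (hk : 0 < k) (b : Fin k → ZMod (2^m)) {i : Fin k}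
    (hi : i ≠ jIdx hk b) : tauF hk b i = b i := by
  rw [tauF, Function.update_of_ne hi]

lemma tauF_parity {k m : ℕ} (hk : 0 < k) (hm : 2 ≤ m) (b : Fin k → ZMod (2^m)) (i : Fin k) :
    ((2 : ZMod (2^m)) ∣ tauF hk b i) ↔ (2 : ZMod (2^m)) ∣ b i := by
  rcases eq_or_ne i (jIdx hk b) with rfl | hi
  · rw [tauF_apply_j]
    exact dvd_add_left (c0_even m hm)
  · rw [tauF_apply_ne hk b hi]

lemma jIdx_tauF {k m : ℕ} (hk : 0 < k) (hm : 2 ≤ m) (b : Fin k → ZMod (2^m)) :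
    jIdx hk (tauF hk b) = jIdx hk b := by
  have hfil : (Finset.univ.filter (fun i => ¬ (2 : ZMod (2^m)) ∣ tauF hk b i))
      = (Finset.univ.filter (fun i => ¬ (2 : ZMod (2^m)) ∣ b i)) := by
    ext i
    simp [tauF_parity hk hm b i]
  rw [jIdx, jIdx, hfil]

lemma tauF_E {k m : ℕ} (hk : 0 < k) (hm : 2 ≤ m) (b : Fin k → ZMod (2^m))
    (hE : ∃ i, ¬ (2 : ZMod (2^m)) ∣ b i) : ∃ i, ¬ (2 : ZMod (2^m)) ∣ tauF hk b i :=
  ⟨jIdx hk b, by rw [tauF_apply_j]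
                 exact fun h => jIdx_odd hk b hE ((dvd_add_left (c0_even m hm)).mp h)⟩

lemma tauF_invol {k m : ℕ} (hk : 0 < k) (hm : 2 ≤ m) (b : Fin k → ZMod (2^m)) :
    tauF hk (tauF hk b) = b := by
  have h1 := jIdx_tauF hk hm b
  rw [tauF, h1, tauF_apply_j, tauF, Function.update_idem, add_assoc,
    c0_add_self m (le_trans one_le_two hm), add_zero, Function.update_eq_self]

lemma tauF_sum_sq {k m : ℕ} (hk : 0 < k) (hm : 2 ≤ m) (b : Fin k → ZMod (2^m)) :
    ∑ i, tauF hk b i ^ 2 = ∑ i, b i ^ 2 := by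
  rw [Finset.sum_eq_add_sum_sdiff_singleton_of_mem (Finset.mem_univ (jIdx hk b))
      (fun i => tauF hk b i ^ 2),
    Finset.sum_eq_add_sum_sdiff_singleton_of_mem (Finset.mem_univ (jIdx hk b)) (fun i => b i ^ 2)]
  have hterm : tauF hk b (jIdx hk b) ^ 2 = b (jIdx hk b) ^ 2 := by
    rw [tauF_apply_j, add_sq, c0_sq m hm, add_zero]
    have h2 : 2 * b (jIdx hk b) * c0 m = b (jIdx hk b) * (2 * c0 m) := by ring
    rw [h2, c0_two_mul m (le_trans one_le_two hm), mul_zero, add_zero]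
  have hrest : ∑ i ∈ Finset.univ \ {jIdx hk b}, tauF hk b i ^ 2
      = ∑ i ∈ Finset.univ \ {jIdx hk b}, b i ^ 2 := by
    refine Finset.sum_congr rfl fun i hi => ?_
    rw [tauF_apply_ne hk b (Finset.notMem_singleton.mp (Finset.mem_sdiff.mp hi).2)]
  rw [hterm, hrest]

lemma tauF_S {k m : ℕ} (hk : 0 < k) (hm : 3 ≤ m) (b : Fin k → ZMod (2^m))
    (hE : ∃ i, ¬ (2 : ZMod (2^m)) ∣ b i) :
    ((∑ i, (tauF hk b i).val ^ 2 : ℕ) : ZMod (2^(m+1)))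
      = ((∑ i, (b i).val ^ 2 : ℕ) : ZMod (2^(m+1))) + ((2^m : ℕ) : ZMod (2^(m+1))) := by
  haveI : NeZero (2^m) := ⟨by positivity⟩
  have hm1 : 1 ≤ m := by omega
  rw [Nat.cast_sum, Nat.cast_sum,
    Finset.sum_eq_add_sum_sdiff_singleton_of_mem (Finset.mem_univ (jIdx hk b))
      (fun i => (((tauF hk b i).val ^ 2 : ℕ) : ZMod (2^(m+1)))),
    Finset.sum_eq_add_sum_sdiff_singleton_of_mem (Finset.mem_univ (jIdx hk b))
      (fun i => (((b i).val ^ 2 : ℕ) : ZMod (2^(m+1))))]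
  have hmod : (tauF hk b (jIdx hk b)).val ≡ (b (jIdx hk b)).val + 2^(m-1) [MOD 2^m] := by
    rw [tauF_apply_j, ZMod.val_add, c0_val m hm1]
    exact Nat.mod_modEq _ _
  have hsq : (((tauF hk b (jIdx hk b)).val ^ 2 : ℕ) : ZMod (2^(m+1)))
      = ((((b (jIdx hk b)).val + 2^(m-1)) ^ 2 : ℕ) : ZMod (2^(m+1))) := by
    rw [ZMod.natCast_eq_natCast_iff]
    exact sq_modEq hm1 hmod
  have h2c : 2 * 2^(m-1) = 2^m := by
    rw [← pow_succ', Nat.sub_add_cancel hm1]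
  have hcsq : (((2^(m-1))^2 : ℕ) : ZMod (2^(m+1))) = 0 := by
    rw [← pow_mul, ZMod.natCast_eq_zero_iff]
    exact pow_dvd_pow 2 (by omega)
  have key : ∀ v : ℕ, ¬ 2 ∣ v →
      (((v + 2^(m-1)) ^ 2 : ℕ) : ZMod (2^(m+1)))
        = ((v ^ 2 : ℕ) : ZMod (2^(m+1))) + ((2^m : ℕ) : ZMod (2^(m+1))) := by
    intro v hvv
    have hv1 : v = 2 * (v / 2) + 1 := by omega
    have hexp : (v + 2^(m-1)) ^ 2 = v ^ 2 + 2^m * v + (2^(m-1))^2 := by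
      rw [← h2c]; ring
    have heq : 2^m * v = 2^(m+1) * (v / 2) + 2^m := by
      calc 2^m * v = 2^m * (2 * (v / 2) + 1) := by rw [← hv1]
      _ = (2^m * 2) * (v / 2) + 2^m := by ring
      _ = 2^(m+1) * (v / 2) + 2^m := by rw [pow_succ]
    rw [hexp, Nat.cast_add, Nat.cast_add, hcsq, add_zero, heq, Nat.cast_add, Nat.cast_mul,
      ZMod.natCast_self, zero_mul, zero_add]
  have hv : ¬ 2 ∣ (b (jIdx hk b)).val := by
    have := jIdx_odd hk b hE
    rwa [two_dvd_iff (dvd_pow_self 2 (by omega))] at this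
  have hterm : (((tauF hk b (jIdx hk b)).val ^ 2 : ℕ) : ZMod (2^(m+1)))
      = (((b (jIdx hk b)).val ^ 2 : ℕ) : ZMod (2^(m+1))) + ((2^m : ℕ) : ZMod (2^(m+1))) := by
    rw [hsq, key _ hv]
  have hrest : ∑ i ∈ Finset.univ \ {jIdx hk b}, (((tauF hk b i).val ^ 2 : ℕ) : ZMod (2^(m+1)))
      = ∑ i ∈ Finset.univ \ {jIdx hk b}, (((b i).val ^ 2 : ℕ) : ZMod (2^(m+1))) := by
    refine Finset.sum_congr rfl fun i hi => ?_
    rw [tauF_apply_ne hk b (Finset.notMem_singleton.mp (Finset.mem_sdiff.mp hi).2)]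
  rw [hterm, hrest]
  ring

end TauMachinery
lemma S_zero_sum {k m : ℕ} (b : Fin k → ZMod (2^m))
    (hS : ((∑ i, (b i).val ^ 2 : ℕ) : ZMod (2^(m+1))) = 0) : ∑ i, b i ^ 2 = 0 := by
  haveI : NeZero (2^m) := ⟨by positivity⟩
  rw [sum_sq_eq_zero_iff]
  rw [ZMod.natCast_eq_zero_iff] at hS
  exact dvd_trans (pow_dvd_pow 2 (Nat.le_succ m)) hS

lemma S_of_ne {k m : ℕ} (b : Fin k → ZMod (2^m)) (h0 : ∑ i, b i ^ 2 = 0)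
    (hS : ((∑ i, (b i).val ^ 2 : ℕ) : ZMod (2^(m+1))) ≠ 0) :
    ((∑ i, (b i).val ^ 2 : ℕ) : ZMod (2^(m+1))) = ((2^m : ℕ) : ZMod (2^(m+1))) := by
  haveI : NeZero (2^m) := ⟨by positivity⟩
  rw [sum_sq_eq_zero_iff] at h0
  obtain ⟨t, ht⟩ := h0
  rcases Nat.even_or_odd t with he | ho
  · exfalso
    apply hS
    obtain ⟨u, hu⟩ := he
    rw [ht, hu, ZMod.natCast_eq_zero_iff]
    refine ⟨u, ?_⟩
    calc 2^m * (u + u) = (2^m * 2) * u := by ring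
    _ = 2^(m+1) * u := by rw [pow_succ]
  · obtain ⟨u, hu⟩ := ho
    have heq : 2^m * t = 2^(m+1) * u + 2^m := by
      calc 2^m * t = 2^m * (2 * u + 1) := by rw [← hu]
      _ = (2^m * 2) * u + 2^m := by ring
      _ = 2^(m+1) * u + 2^m := by rw [pow_succ]
    rw [ht, heq, Nat.cast_add, Nat.cast_mul, ZMod.natCast_self, zero_mul, zero_add]

lemma twoPow_ne_zero (m : ℕ) : ((2^m : ℕ) : ZMod (2^(m+1))) ≠ 0 := by
  rw [Ne, ZMod.natCast_eq_zero_iff, Nat.pow_dvd_pow_iff_le_right one_lt_two]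
  omega

lemma twoPow_add_self (m : ℕ) :
    ((2^m : ℕ) : ZMod (2^(m+1))) + ((2^m : ℕ) : ZMod (2^(m+1))) = 0 := by
  rw [← Nat.cast_add]
  have h : (2^m + 2^m : ℕ) = 2^(m+1) := by
    calc (2^m + 2^m : ℕ) = 2^m * 2 := by ring
    _ = 2^(m+1) := by rw [pow_succ]
  rw [h, ZMod.natCast_self]

lemma rho1_step (k m : ℕ) (hk : 0 < k) (hm : 3 ≤ m) :
    rho1 k 0 2 (m+1) = 2^(k-1) * rho1 k 0 2 m := by
  classical
  haveI hz1 : NeZero (2^m) := ⟨by positivity⟩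
  haveI hz2 : NeZero (2^(m+1)) := ⟨by positivity⟩
  have hm1 : 1 ≤ m := by omega
  have hm2 : 2 ≤ m := by omega
  have hd : m ≤ m + 1 := Nat.le_succ m
  -- parity is preserved by the cast
  have hpar : ∀ z : ZMod (2^(m+1)),
      ((2 : ZMod (2^m)) ∣ ZMod.castHom (pow_dvd_pow 2 hd) (ZMod (2^m)) z
        ↔ (2 : ZMod (2^(m+1))) ∣ z) := by
    intro z
    rw [two_dvd_iff (dvd_pow_self 2 (show m ≠ 0 by omega)),
      two_dvd_iff (dvd_pow_self 2 (show m + 1 ≠ 0 by omega)),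
      ZMod.castHom_apply, ← ZMod.natCast_val, ZMod.val_natCast]
    exact Nat.dvd_mod_iff (dvd_pow_self 2 (show m ≠ 0 by omega))
  -- Step A : fibers of the coordinatewise cast
  have hcA : ∀ b : Fin k → ZMod (2^m),
      (∃ x : Fin k → ZMod (2^(m+1)),
        (fun i => ZMod.castHom (pow_dvd_pow 2 hd) (ZMod (2^m)) (x i)) = b) →
      Nat.card {x : Fin k → ZMod (2^(m+1)) //
        (fun i => ZMod.castHom (pow_dvd_pow 2 hd) (ZMod (2^m)) (x i)) = b} = 2^k := by
    intro b hb
    have hker0 : Nat.card {z : ZMod (2^(m+1)) //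
        ZMod.castHom (pow_dvd_pow 2 hd) (ZMod (2^m)) z = 0} = 2 := by
      rw [card_ker_cast hd, Nat.add_sub_cancel_left, pow_one]
    have := card_fiber_pi (ZMod.castHom (pow_dvd_pow 2 hd) (ZMod (2^m))).toAddMonoidHom
      2 (by simpa using hker0) b (by simpa using hb)
    simpa using this
  have stepA := card_comp
    (fun (x : Fin k → ZMod (2^(m+1))) (i : Fin k) =>
      ZMod.castHom (pow_dvd_pow 2 hd) (ZMod (2^m)) (x i)) (2^k) hcA
    (fun b : Fin k → ZMod (2^m) =>
      (((∑ i, (b i).val ^ 2 : ℕ) : ZMod (2^(m+1))) = 0) ∧ ∃ i, ¬ (2 : ZMod (2^m)) ∣ b i)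
  -- identify the source with the `rho1 (m+1)` set
  have eA : {x : Fin k → ZMod (2^(m+1)) //
        (((∑ i, (ZMod.castHom (pow_dvd_pow 2 hd) (ZMod (2^m)) (x i)).val ^ 2 : ℕ) :
            ZMod (2^(m+1))) = 0)
          ∧ ∃ i, ¬ (2 : ZMod (2^m)) ∣ ZMod.castHom (pow_dvd_pow 2 hd) (ZMod (2^m)) (x i)}
      ≃ {x : Fin k → ZMod (2^(m+1)) //
        (∑ i, x i ^ 2 = ((0:ℤ) : ZMod (2^(m+1))))
          ∧ ∃ i, ¬ ((2:ℕ) : ZMod (2^(m+1))) ∣ x i} := by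
    apply Equiv.subtypeEquivRight
    intro x
    have hsum_iff : (((∑ i, (ZMod.castHom (pow_dvd_pow 2 hd) (ZMod (2^m)) (x i)).val ^ 2 : ℕ) :
        ZMod (2^(m+1))) = 0) ↔ (∑ i, x i ^ 2 = ((0:ℤ) : ZMod (2^(m+1)))) := by
      rw [S_cast hm1 x, Int.cast_zero]
    have hodd_iff : (∃ i, ¬ (2 : ZMod (2^m)) ∣ ZMod.castHom (pow_dvd_pow 2 hd) (ZMod (2^m)) (x i))
        ↔ ∃ i, ¬ ((2:ℕ) : ZMod (2^(m+1))) ∣ x i := by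
      rw [Nat.cast_ofNat]
      exact exists_congr fun i => not_congr (hpar (x i))
    exact and_congr hsum_iff hodd_iff
  rw [Nat.card_congr eA] at stepA
  -- drop the (trivial) range condition in the target
  have eB : {b : Fin k → ZMod (2^m) //
      ((((∑ i, (b i).val ^ 2 : ℕ) : ZMod (2^(m+1))) = 0) ∧ ∃ i, ¬ (2 : ZMod (2^m)) ∣ b i)
        ∧ ∃ x : Fin k → ZMod (2^(m+1)),
          (fun i => ZMod.castHom (pow_dvd_pow 2 hd) (ZMod (2^m)) (x i)) = b}
      ≃ {b : Fin k → ZMod (2^m) //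
        (((∑ i, (b i).val ^ 2 : ℕ) : ZMod (2^(m+1))) = 0) ∧ ∃ i, ¬ (2 : ZMod (2^m)) ∣ b i} := by
    apply Equiv.subtypeEquivRight
    intro b
    refine ⟨fun h => h.1, fun h => ⟨h, ⟨fun i => (((b i).val : ℕ) : ZMod (2^(m+1))),
      funext fun i => ?_⟩⟩⟩
    rw [map_natCast, ← zmod_eq_natCast_val]
  rw [Nat.card_congr eB] at stepA
  -- Step B : split the mod-2^m primitive solutions by the value of S
  have splitB := card_split
    (fun b : Fin k → ZMod (2^m) => (∑ i, b i ^ 2 = 0) ∧ ∃ i, ¬ (2 : ZMod (2^m)) ∣ b i)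
    (fun b => ((∑ i, (b i).val ^ 2 : ℕ) : ZMod (2^(m+1))) = 0)
  have e5 : {b : Fin k → ZMod (2^m) //
      ((∑ i, b i ^ 2 = 0) ∧ ∃ i, ¬ (2 : ZMod (2^m)) ∣ b i) ∧
        ((∑ i, (b i).val ^ 2 : ℕ) : ZMod (2^(m+1))) = 0}
      ≃ {b : Fin k → ZMod (2^m) //
        (((∑ i, (b i).val ^ 2 : ℕ) : ZMod (2^(m+1))) = 0) ∧ ∃ i, ¬ (2 : ZMod (2^m)) ∣ b i} :=
    Equiv.subtypeEquivRight fun b =>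
      ⟨fun h => ⟨h.2, h.1.2⟩, fun h => ⟨⟨S_zero_sum b h.1, h.2⟩, h.1⟩⟩
  have e6 : {b : Fin k → ZMod (2^m) //
      ((∑ i, b i ^ 2 = 0) ∧ ∃ i, ¬ (2 : ZMod (2^m)) ∣ b i) ∧
        ((∑ i, (b i).val ^ 2 : ℕ) : ZMod (2^(m+1))) = 0}
      ≃ {b : Fin k → ZMod (2^m) //
      ((∑ i, b i ^ 2 = 0) ∧ ∃ i, ¬ (2 : ZMod (2^m)) ∣ b i) ∧
        ¬ ((∑ i, (b i).val ^ 2 : ℕ) : ZMod (2^(m+1))) = 0} := by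
    refine ⟨fun p => ⟨tauF hk p.1, ?_⟩, fun p => ⟨tauF hk p.1, ?_⟩, ?_, ?_⟩
    · obtain ⟨⟨h0, hE⟩, hS⟩ := p.2
      refine ⟨⟨?_, tauF_E hk hm2 p.1 hE⟩, ?_⟩
      · rw [tauF_sum_sq hk hm2 p.1]; exact h0
      · rw [tauF_S hk hm p.1 hE, hS, zero_add]
        exact twoPow_ne_zero m
    · obtain ⟨⟨h0, hE⟩, hS⟩ := p.2
      refine ⟨⟨?_, tauF_E hk hm2 p.1 hE⟩, ?_⟩
      · rw [tauF_sum_sq hk hm2 p.1]; exact h0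
      · rw [tauF_S hk hm p.1 hE, S_of_ne p.1 h0 hS, twoPow_add_self]
    · intro p
      exact Subtype.ext (tauF_invol hk hm2 p.1)
    · intro p
      exact Subtype.ext (tauF_invol hk hm2 p.1)
  rw [Nat.card_congr (e6.symm.trans e5), Nat.card_congr e5] at splitB
  -- identify `rho1` values
  have hAset : rho1 k 0 2 (m+1) = Nat.card {x : Fin k → ZMod (2^(m+1)) //
      (∑ i, x i ^ 2 = ((0:ℤ) : ZMod (2^(m+1))))
        ∧ ∃ i, ¬ ((2:ℕ) : ZMod (2^(m+1))) ∣ x i} := rfl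
  have hQset : rho1 k 0 2 m = Nat.card {b : Fin k → ZMod (2^m) //
      (∑ i, b i ^ 2 = 0) ∧ ∃ i, ¬ (2 : ZMod (2^m)) ∣ b i} := by
    apply Nat.card_congr
    apply Equiv.subtypeEquivRight
    intro b
    rw [Int.cast_zero, Nat.cast_ofNat]
  rw [hAset, stepA, hQset, splitB]
  have hpow : 2^(k-1) * 2 = 2^k := by
    rw [← pow_succ, Nat.sub_add_cancel hk]
  calc 2^k * Nat.card {b : Fin k → ZMod (2^m) //
      (((∑ i, (b i).val ^ 2 : ℕ) : ZMod (2^(m+1))) = 0) ∧ ∃ i, ¬ (2 : ZMod (2^m)) ∣ b i}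
      = (2^(k-1) * 2) * Nat.card {b : Fin k → ZMod (2^m) //
      (((∑ i, (b i).val ^ 2 : ℕ) : ZMod (2^(m+1))) = 0) ∧ ∃ i, ¬ (2 : ZMod (2^m)) ∣ b i} := by
        rw [hpow]
  _ = 2^(k-1) * (Nat.card {b : Fin k → ZMod (2^m) //
      (((∑ i, (b i).val ^ 2 : ℕ) : ZMod (2^(m+1))) = 0) ∧ ∃ i, ¬ (2 : ZMod (2^m)) ∣ b i}
      + Nat.card {b : Fin k → ZMod (2^m) //
      (((∑ i, (b i).val ^ 2 : ℕ) : ZMod (2^(m+1))) = 0) ∧ ∃ i, ¬ (2 : ZMod (2^m)) ∣ b i}) := by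
        ring
lemma rho1_pow (k m : ℕ) (hk : 0 < k) (hm : 3 ≤ m) :
    rho1 k 0 2 m = 2^((m-3)*(k-1)) * rho1 k 0 2 3 := by
  induction m, hm using Nat.le_induction with
  | base => simp
  | succ m hm IH =>
    rw [rho1_step k m hk hm, IH, ← mul_assoc, ← pow_add]
    have h : (k-1) + (m-3)*(k-1) = (m+1-3)*(k-1) := by
      have h2 : m+1-3 = (m-3)+1 := by omega
      rw [h2]; ring
    rw [h]

lemma card_even_one (k : ℕ) :
    Nat.card {x : Fin k → ZMod (2^1) //
      (∑ i, x i ^ 2 = 0) ∧ ∀ i, (2 : ZMod (2^1)) ∣ x i} = 1 := by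
  have h2 : (2 : ZMod (2^1)) = 0 := by decide
  haveI : Unique {x : Fin k → ZMod (2^1) //
      (∑ i, x i ^ 2 = 0) ∧ ∀ i, (2 : ZMod (2^1)) ∣ x i} := by
    refine ⟨⟨⟨0, ?_, ?_⟩⟩, ?_⟩
    · simp
    · intro i; simp
    · rintro ⟨x, hx1, hx2⟩
      apply Subtype.ext
      funext i
      have := hx2 i
      rw [h2, zero_dvd_iff] at this
      exact this
  exact Nat.card_unique

/-- `ρ_{k,0}(2^s) = Σ_{i=0}^{⌊(s−1)/2⌋−1} 2^{ki+(s−2i−3)(k−1)} · ρ^{(1)}_{k,0}(8)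
+ 2^{⌊(s−1)/2⌋k} · ρ^{(1)}_{k,0}(2^{s−2⌊(s−1)/2⌋}) + 2^{⌊s/2⌋k}`. -/
theorem rho_two_pow_zero (k : ℕ) (hk : 0 < k) (s : ℕ) (hs : 1 ≤ s) :
    rho k 0 (2 ^ s) =
      ∑ i ∈ Finset.range ((s - 1) / 2),
        2 ^ (k * i + (s - 2 * i - 3) * (k - 1)) * rho1 k 0 2 3
      + 2 ^ ((s - 1) / 2 * k) * rho1 k 0 2 (s - 2 * ((s - 1) / 2))
      + 2 ^ (s / 2 * k) := by
  induction s using Nat.strong_induction_on with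
  | _ s IH =>
  cases s with
  | zero => exact absurd hs (by norm_num)
  | succ s0 =>
    cases s0 with
    | zero =>
      -- s = 1
      norm_num
      conv_lhs => rw [show (2:ℕ) = 2^1 by norm_num]
      rw [rho_split k 1, card_even_one k]
    | succ s1 =>
      cases s1 with
      | zero =>
        -- s = 2
        norm_num
        conv_lhs => rw [show (4:ℕ) = 2^2 by norm_num]
        rw [rho_split k 2, card_even k 2 le_rfl]
        norm_num [rho_one]
      | succ t =>
        -- s = t + 3
        have g0 : t + 3 - 2 = t + 1 := by omega
        have g1 : (t + 3 - 1) / 2 = t / 2 + 1 := by omega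
        have g2 : (t + 1 - 1) / 2 = t / 2 := by omega
        have g3 : (t + 3) / 2 = (t + 1) / 2 + 1 := by omega
        have g4 : t + 3 - 2 * (t / 2 + 1) = t + 1 - 2 * (t / 2) := by omega
        have g5 : t + 3 - 3 = t := by omega
        have g6 : t + 3 - 2 * 0 - 3 = t := by omega
        rw [rho_split k (t+3), card_even k (t+3) (by norm_num), g0,
          IH (t+1) (by omega) (by omega), g2, g1, g3, g4,
          rho1_pow k (t+3) hk (by norm_num), g5, Finset.sum_range_succ']
        have g7 : k * 0 + (t+3-2*0-3) * (k-1) = t * (k-1) := by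
          rw [g6, Nat.mul_zero, Nat.zero_add]
        rw [g7]
        have hterm : ∀ i ∈ Finset.range (t/2),
            2^(k*(i+1) + (t+3-2*(i+1)-3)*(k-1)) * rho1 k 0 2 3
              = 2^k * (2^(k*i + (t+1-2*i-3)*(k-1)) * rho1 k 0 2 3) := by
          intro i _
          have h7 : t+3-2*(i+1)-3 = t+1-2*i-3 := by omega
          rw [h7]
          have h8 : k*(i+1) + (t+1-2*i-3)*(k-1) = k + (k*i + (t+1-2*i-3)*(k-1)) := by ring
          rw [h8, pow_add, mul_assoc]
        rw [Finset.sum_congr rfl hterm, ← Finset.mul_sum]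
        rw [add_mul (t/2) 1 k, one_mul, pow_add]
        rw [add_mul ((t+1)/2) 1 k, one_mul, pow_add]
        ring
end

section
/- Let p be an odd prime, k a positive integer, s ≥ 1 an integer, and λ an integer with 0 < λ < p^s. Write λ = p^r·λ' with 0 ≤ r < s, p ∤ λ', and suppose r is odd. Then ρ_{k,λ}(p^s) = (Σ_{i=0}^{(r−1)/2} p^{ki + (s−2i−1)(k−1)}) · (ρ_{k,0}(p) − 1). -/
open Finset

/-- multiplication-by-`m` map `ZMod n → ZMod N` where `m * n = N`. -/
def mm (m : ℕ) {n : ℕ} (N : ℕ) (z : ZMod n) : ZMod N := (m : ZMod N) * (z.val : ZMod N)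

variable {m n N : ℕ}

lemma mm_natCast [NeZero n] (h : m * n = N) (c : ℕ) :
    mm m N ((c : ZMod n)) = (m : ZMod N) * (c : ZMod N) := by
  rw [mm, ZMod.val_natCast]
  conv_rhs => rw [show c = n * (c / n) + c % n from (Nat.div_add_mod c n).symm]
  push_cast
  rw [mul_add, ← mul_assoc, show ((m : ZMod N) * n = 0) from by
    rw [← Nat.cast_mul, h, ZMod.natCast_self], zero_mul, zero_add]

lemma mm_elem [NeZero n] [NeZero N] (h : m * n = N) (A : ZMod N) :
    (m : ZMod N) * A = mm m N ((A.val : ZMod n)) := by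
  rw [mm_natCast h, ZMod.natCast_val, ZMod.cast_id]

lemma mm_add [NeZero n] (h : m * n = N) (a b : ZMod n) :
    mm m N (a + b) = mm m N a + mm m N b := by
  have h1 : ((a.val + b.val : ℕ) : ZMod n) = a + b := by
    push_cast [ZMod.natCast_val, ZMod.cast_id]
    rfl
  rw [← h1, mm_natCast h, mm, mm]
  push_cast
  ring

lemma mm_zero : mm m (n := n) N 0 = 0 := by
  simp [mm, ZMod.val_zero]

/-- `mm` as an additive hom. -/
def mmHom [NeZero n] (h : m * n = N) : ZMod n →+ ZMod N where
  toFun := mm m N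
  map_zero' := by simp [mm]
  map_add' := mm_add h

lemma mm_eq_zero_iff [NeZero n] [NeZero N] (h : m * n = N) (hm : 0 < m) (z : ZMod n) :
    mm m N z = 0 ↔ z = 0 := by
  constructor
  · intro hz
    have h1 : ((m * z.val : ℕ) : ZMod N) = 0 := by push_cast; exact hz
    rw [ZMod.natCast_eq_zero_iff, ← h] at h1
    have h2 : n ∣ z.val := (mul_dvd_mul_iff_left hm.ne').mp h1
    have h3 : z.val < n := ZMod.val_lt z
    have h4 : z.val = 0 := Nat.eq_zero_of_dvd_of_lt h2 h3
    exact (ZMod.val_eq_zero z).mp h4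
  · rintro rfl; exact mm_zero


/-- partial inverse of `mm`. -/
def mmInv (m : ℕ) {N : ℕ} (n : ℕ) (A : ZMod N) : ZMod n := ((A.val / m : ℕ) : ZMod n)

lemma mmInv_mm [NeZero n] [NeZero N] (h : m * n = N) (hm : 0 < m) (z : ZMod n) :
    mmInv m n (mm m N z) = z := by
  have h1 : (mm m N z) = ((m * z.val : ℕ) : ZMod N) := by rw [mm]; push_cast; rfl
  have h2 : m * z.val < N := by
    have := ZMod.val_lt z
    calc m * z.val < m * n := by exact (Nat.mul_lt_mul_left hm).mpr this
    _ = N := h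
  rw [mmInv, h1, ZMod.val_natCast, Nat.mod_eq_of_lt h2, Nat.mul_div_cancel_left _ hm]
  rw [ZMod.natCast_val, ZMod.cast_id]

lemma mm_mmInv [NeZero n] [NeZero N] (h : m * n = N) (hm : 0 < m)
    (A : ZMod N) (hA : (A.val : ZMod m) = 0) : mm m N (mmInv m n A) = A := by
  have hdvd : m ∣ A.val := (ZMod.natCast_eq_zero_iff _ _).mp hA
  obtain ⟨q, hq⟩ := hdvd
  have hq2 : q < n := by
    have := ZMod.val_lt A
    rw [hq, ← h] at this
    exact lt_of_mul_lt_mul_left this (Nat.zero_le m)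
  rw [mmInv, hq, Nat.mul_div_cancel_left _ hm, mm, ZMod.val_natCast,
    Nat.mod_eq_of_lt hq2, ← Nat.cast_mul, ← hq, ZMod.natCast_val, ZMod.cast_id]

lemma val_castHom_eq {M : ℕ} [NeZero N] (hd : M ∣ N) (A : ZMod N) :
    (ZMod.castHom hd (ZMod M)) A = ((A.val : ℕ) : ZMod M) := by
  rw [ZMod.castHom_apply, ← ZMod.natCast_val]

-- castHom of mm is w.val reduction facts
lemma castHom_mm_eq_zero [NeZero n] [NeZero N] (h : m * n = N) (hd : m ∣ N) (z : ZMod n) :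
    (ZMod.castHom hd (ZMod m)) (mm m N z) = 0 := by
  rw [mm, map_mul, map_natCast, ZMod.natCast_self, zero_mul]


lemma self_natCast_val [NeZero n] (a : ZMod n) : ((a.val : ℕ) : ZMod n) = a := by
  rw [ZMod.natCast_val, ZMod.cast_id]

lemma mm_mul_right {m n N : ℕ} [NeZero n] [NeZero N] (h : m * n = N) (hd : n ∣ N)
    (a : ZMod n) (B : ZMod N) :
    mm m N a * B = mm m N (a * (ZMod.castHom hd (ZMod n)) B) := by
  have h1 : mm m N a * B = (m : ZMod N) * ((a.val : ZMod N) * B) := by rw [mm, mul_assoc]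
  rw [h1, mm_elem h, ← val_castHom_eq hd]
  congr 1
  rw [map_mul, map_natCast, self_natCast_val]

lemma mm_mul_mm {m n N n' : ℕ} [NeZero n] [NeZero n'] [NeZero N]
    (h2 : m * m * n' = N) (hd : n' ∣ n) (a b : ZMod n) :
    mm m N a * mm m N b =
      mm (m * m) N ((ZMod.castHom hd (ZMod n')) a * (ZMod.castHom hd (ZMod n')) b) := by
  have h1 : mm m N a * mm m N b = ((m * m : ℕ) : ZMod N) * ((a.val * b.val : ℕ) : ZMod N) := by
    rw [mm, mm]; push_cast; ring
  rw [h1, ← mm_natCast h2]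
  congr 1
  push_cast
  rw [ZMod.castHom_apply, ZMod.castHom_apply, ← ZMod.natCast_val, ← ZMod.natCast_val]

/-- the fiber of `ZMod N → ZMod m` over `w` is in bijection with `ZMod n` when `m * n = N`. -/
noncomputable def fiberEquiv {m n N : ℕ} [NeZero m] [NeZero n] [NeZero N]
    (h : m * n = N) (hd : m ∣ N) (w : ZMod m) :
    ZMod n ≃ {z : ZMod N // (ZMod.castHom hd (ZMod m)) z = w} where
  toFun t := ⟨((w.val : ℕ) : ZMod N) + mm m N t, by
    rw [map_add, castHom_mm_eq_zero h hd, add_zero, map_natCast, self_natCast_val]⟩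
  invFun z := mmInv m n (z.1 - ((w.val : ℕ) : ZMod N))
  left_inv t := by
    simp only [add_sub_cancel_left]
    exact mmInv_mm h (Nat.pos_of_ne_zero (NeZero.ne m)) t
  right_inv z := by
    have hm : 0 < m := Nat.pos_of_ne_zero (NeZero.ne m)
    have hker : (((z.1 - ((w.val : ℕ) : ZMod N)).val : ℕ) : ZMod m) = 0 := by
      rw [← val_castHom_eq hd, map_sub, z.2, map_natCast, self_natCast_val, sub_self]
    have := mm_mmInv h hm _ hker
    apply Subtype.ext
    simp only [this, add_sub_cancel]

lemma nat_card_sigma {ι : Type*} [Fintype ι] (f : ι → Type*) [∀ i, Finite (f i)] :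
    Nat.card ((i : ι) × f i) = ∑ i, Nat.card (f i) := by
  have : ∀ i, Fintype (f i) := fun i => Fintype.ofFinite _
  rw [Nat.card_eq_fintype_card, Fintype.card_sigma]
  simp [Nat.card_eq_fintype_card]

lemma erase_sum_update {F : Type*} [Field F] [DecidableEq F] {k : ℕ}
    (c : Fin k → F) (j : Fin k) (t : Fin k → F) (v : F) :
    ∑ i ∈ univ.erase j, c i * (Function.update t j v) i = ∑ i ∈ univ.erase j, c i * t i := by
  refine Finset.sum_congr rfl (fun i hi => ?_)
  rw [Function.update_of_ne (Finset.mem_erase.mp hi).1]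

noncomputable def linEquiv {F : Type*} [Field F] [DecidableEq F] {k : ℕ}
    (c : Fin k → F) (j : Fin k) (hc : c j ≠ 0) : (Fin k → F) ≃ (Fin k → F) where
  toFun t := Function.update t j (∑ i, c i * t i)
  invFun u := Function.update u j ((c j)⁻¹ * (u j - ∑ i ∈ univ.erase j, c i * u i))
  left_inv t := by
    funext i
    dsimp only
    by_cases hij : i = j
    · subst hij
      rw [Function.update_self, Function.update_self, erase_sum_update,
        ← Finset.add_sum_erase univ (fun w => c w * t w) (Finset.mem_univ i)]
      field_simp
      ring
    · rw [Function.update_of_ne hij, Function.update_of_ne hij]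
  right_inv u := by
    funext i
    dsimp only
    by_cases hij : i = j
    · subst hij
      rw [← Finset.add_sum_erase univ (fun w => c w * (Function.update u i
          ((c i)⁻¹ * (u i - ∑ w ∈ univ.erase i, c w * u w))) w) (Finset.mem_univ i),
        erase_sum_update, Function.update_self, Function.update_self]
      field_simp
      ring
    · rw [Function.update_of_ne hij, Function.update_of_ne hij]

lemma nat_card_linear {F : Type*} [Field F] [Fintype F] [DecidableEq F] {k : ℕ}
    (c : Fin k → F) (j : Fin k) (hc : c j ≠ 0) (d : F) :
    Nat.card {t : Fin k → F // ∑ i, c i * t i = d} = Fintype.card F ^ (k - 1) := by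
  have e1 : {t : Fin k → F // ∑ i, c i * t i = d} ≃ {u : Fin k → F // u j = d} := by
    refine Equiv.subtypeEquiv (linEquiv c j hc) (fun t => ?_)
    simp [linEquiv, Function.update_self]
  have e2 : {u : Fin k → F // u j = d} ≃ ({i : Fin k // i ≠ j} → F) := {
    toFun := fun u w => u.1 w.1
    invFun := fun v => ⟨fun i => if h : i = j then d else v ⟨i, h⟩, by simp⟩
    left_inv := fun u => by
      apply Subtype.ext; funext i
      by_cases h : i = j
      · subst h; simp [u.2]
      · simp [h]
    right_inv := fun v => by
      funext w
      simp [w.2] }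
  rw [Nat.card_congr (e1.trans e2), Nat.card_eq_fintype_card, Fintype.card_fun,
    Fintype.card_subtype_compl, Fintype.card_subtype_eq, Fintype.card_fin]

lemma mm_sub {m n N : ℕ} [NeZero n] (h : m * n = N) (a b : ZMod n) :
    mm m N (a - b) = mm m N a - mm m N b :=
  map_sub (mmHom h) a b

lemma mm_inj {m n N : ℕ} [NeZero n] [NeZero N] (h : m * n = N) (hm : 0 < m) {a b : ZMod n}
    (hab : mm m N a = mm m N b) : a = b := by
  have h0 : mm m N (a - b) = 0 := by rw [mm_sub h, hab, sub_self]
  have := (mm_eq_zero_iff h hm (a - b)).mp h0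
  linear_combination (norm := abel) this

noncomputable def rhoP (k : ℕ) (lam : ℤ) (p N : ℕ) : ℕ :=
  Nat.card {x : Fin k → ZMod N //
    (∑ i, x i ^ 2 = (lam : ZMod N)) ∧ ∃ i, ¬ p ∣ (x i).val}
lemma rhoP_step (p : ℕ) (hp : p.Prime) (hodd : Odd p) (k : ℕ) (lam : ℤ) (t : ℕ) (ht : 1 ≤ t) :
    rhoP k lam p (p ^ (t + 1)) = p ^ (k - 1) * rhoP k lam p (p ^ t) := by
  haveI : Fact p.Prime := ⟨hp⟩
  haveI hNp : NeZero p := ⟨hp.pos.ne'⟩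
  haveI hNM : NeZero (p ^ t) := ⟨pow_ne_zero _ hp.pos.ne'⟩
  haveI hNN : NeZero (p ^ (t + 1)) := ⟨pow_ne_zero _ hp.pos.ne'⟩
  set M := p ^ t with hMdef
  set N := p ^ (t + 1) with hNdef
  have hMN : M * p = N := by rw [hMdef, hNdef, pow_succ]
  have hdM : M ∣ N := ⟨p, hMN.symm⟩
  have hdp : p ∣ N := dvd_pow_self p (Nat.succ_ne_zero t)
  have hdpM : p ∣ M := dvd_pow_self p (by omega)
  have hMpos : 0 < M := Nat.pos_of_ne_zero hNM.1
  -- reduction maps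
  set πM := ZMod.castHom hdM (ZMod M) with hπM
  -- key val fact
  have hval : ∀ z : ZMod N, p ∣ (πM z).val ↔ p ∣ z.val := by
    intro z
    rw [hπM, val_castHom_eq hdM z, ZMod.val_natCast]
    exact Nat.dvd_mod_iff hdpM
  -- the two solution types
  set A := {x : Fin k → ZMod N // (∑ i, x i ^ 2 = (lam : ZMod N)) ∧ ∃ i, ¬ p ∣ (x i).val}
    with hA
  set B := {y : Fin k → ZMod M // (∑ i, y i ^ 2 = (lam : ZMod M)) ∧ ∃ i, ¬ p ∣ (y i).val}
    with hB
  have hBsolve : ∀ x : A, ∑ i, (πM (x.1 i)) ^ 2 = (lam : ZMod M) := by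
    intro x
    have := congrArg πM x.2.1
    rw [map_sum, map_intCast] at this
    simpa using this
  set F : A → B := fun x => ⟨fun i => πM (x.1 i), hBsolve x, by
    obtain ⟨i, hi⟩ := x.2.2
    exact ⟨i, fun hc => hi ((hval _).mp hc)⟩⟩ with hF
  -- fibers of F have cardinality p ^ (k-1)
  have hfiber : ∀ y : B, Nat.card {a : A // F a = y} = p ^ (k - 1) := by
    intro y
    -- notation
    set Y : Fin k → ZMod N := fun i => (((y.1 i).val : ℕ) : ZMod N) with hY
    set cbar : Fin k → ZMod p := fun i => (((y.1 i).val : ℕ) : ZMod p) with hcbar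
    set c : Fin k → ZMod p := fun i => 2 * cbar i with hc
    have hπY : ∀ i, πM (Y i) = y.1 i := by
      intro i
      rw [hY, hπM]
      simp only [map_natCast]
      exact self_natCast_val _
    have hMM : (M : ZMod N) * (M : ZMod N) = 0 := by
      rw [← Nat.cast_mul, hMdef, ← pow_add, hNdef, ZMod.natCast_eq_zero_iff]
      exact pow_dvd_pow p (by omega)
    have hmmsq : ∀ a b : ZMod p, mm M N a * mm M N b = 0 := by
      intro a b
      rw [mm, mm]
      calc (M : ZMod N) * a.val * ((M : ZMod N) * b.val)
          = (M : ZMod N) * (M : ZMod N) * (a.val * b.val) := by ring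
        _ = 0 := by rw [hMM, zero_mul]
    have hYmm : ∀ i, ∀ u : ZMod p, Y i * mm M N u = mm M N (u * cbar i) := by
      intro i u
      rw [mul_comm, mm_mul_right hMN hdp u (Y i)]
      congr 1
      rw [hY]
      simp only [map_natCast]
      rfl
    -- the quadratic expansion
    have hcomp : ∀ u : Fin k → ZMod p,
        ∑ i, (Y i + mm M N (u i)) ^ 2 = ∑ i, Y i ^ 2 + mm M N (∑ i, c i * u i) := by
      intro u
      have hterm : ∀ i, (Y i + mm M N (u i)) ^ 2 = Y i ^ 2 + mm M N (c i * u i) := by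
        intro i
        have e1 : (Y i + mm M N (u i)) ^ 2
            = Y i ^ 2 + (Y i * mm M N (u i) + Y i * mm M N (u i))
              + mm M N (u i) * mm M N (u i) := by ring
        rw [e1, hmmsq, add_zero, hYmm, ← mm_add hMN]
        congr 1
        rw [hc]
        ring_nf
      rw [show (∑ i, c i * u i) = ∑ i, c i * u i from rfl]
      calc ∑ i, (Y i + mm M N (u i)) ^ 2 = ∑ i, (Y i ^ 2 + mm M N (c i * u i)) := by
            exact Finset.sum_congr rfl (fun i _ => hterm i)
        _ = ∑ i, Y i ^ 2 + ∑ i, mm M N (c i * u i) := Finset.sum_add_distrib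
        _ = ∑ i, Y i ^ 2 + mm M N (∑ i, c i * u i) := by
            congr 1
            exact (map_sum (mmHom hMN) (fun i => c i * u i) univ).symm
    -- kernel fact and d
    have hker : (((lam : ZMod N) - ∑ i, Y i ^ 2).val : ZMod M) = 0 := by
      rw [← val_castHom_eq hdM, map_sub, map_intCast, map_sum]
      have : ∑ i, πM (Y i ^ 2) = (lam : ZMod M) := by
        calc ∑ i, πM (Y i ^ 2) = ∑ i, (y.1 i) ^ 2 := by
              refine Finset.sum_congr rfl (fun i _ => ?_)
              rw [map_pow, hπY]
          _ = (lam : ZMod M) := y.2.1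
      rw [this, sub_self]
    set d : ZMod p := mmInv M p ((lam : ZMod N) - ∑ i, Y i ^ 2) with hd
    have hmmd : mm M N d = (lam : ZMod N) - ∑ i, Y i ^ 2 := mm_mmInv hMN hMpos _ hker
    -- flatten the fiber
    have E1 : {a : A // F a = y} ≃
        {x : Fin k → ZMod N // (∑ i, x i ^ 2 = (lam : ZMod N)) ∧ ∀ i, πM (x i) = y.1 i} := by
      refine ⟨fun a => ⟨a.1.1, a.1.2.1, fun i => ?_⟩, fun x => ⟨⟨x.1, x.2.1, ?_⟩, ?_⟩, ?_, ?_⟩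
      · have := congrArg Subtype.val a.2
        exact congrFun this i
      · obtain ⟨i, hi⟩ := y.2.2
        refine ⟨i, fun hdvd => hi ?_⟩
        rw [← x.2.2 i]
        exact (hval _).mpr hdvd
      · apply Subtype.ext
        show (fun i => πM (x.1 i)) = y.1
        funext i
        exact x.2.2 i
      · intro a; apply Subtype.ext; rfl
      · intro x; apply Subtype.ext; rfl
    -- equivalence with the linear solution set
    have E2 : {x : Fin k → ZMod N // (∑ i, x i ^ 2 = (lam : ZMod N)) ∧ ∀ i, πM (x i) = y.1 i}
        ≃ {u : Fin k → ZMod p // ∑ i, c i * u i = d} := by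
      refine ⟨fun x => ⟨fun i => mmInv M p (x.1 i - Y i), ?_⟩,
        fun u => ⟨fun i => Y i + mm M N (u.1 i), ?_, ?_⟩, ?_, ?_⟩
      · -- forward condition
        have hxker : ∀ i, mm M N (mmInv M p (x.1 i - Y i)) = x.1 i - Y i := by
          intro i
          refine mm_mmInv hMN hMpos _ ?_
          rw [← val_castHom_eq hdM, map_sub, x.2.2 i, hπY, sub_self]
        have hxi : ∀ i, x.1 i = Y i + mm M N (mmInv M p (x.1 i - Y i)) := by
          intro i; rw [hxker]; ring
        have hsum : ∑ i, (Y i + mm M N (mmInv M p (x.1 i - Y i))) ^ 2 = (lam : ZMod N) := by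
          rw [← Finset.sum_congr rfl (fun i _ => by rw [← hxi i])]
          exact x.2.1
        rw [hcomp] at hsum
        have : mm M N (∑ i, c i * mmInv M p (x.1 i - Y i)) = mm M N d := by
          rw [hmmd]
          linear_combination (norm := abel) hsum
        exact mm_inj hMN hMpos this
      · -- backward : solution
        rw [hcomp, u.2, hmmd]
        ring
      · intro i
        rw [map_add, castHom_mm_eq_zero hMN hdM, add_zero, hπY]
      · -- left inverse
        intro x
        apply Subtype.ext
        funext i
        dsimp only
        have : πM (x.1 i - Y i) = 0 := by rw [map_sub, x.2.2 i, hπY, sub_self]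
        rw [mm_mmInv hMN hMpos _ (by rw [← val_castHom_eq hdM]; exact this)]
        ring
      · -- right inverse
        intro u
        apply Subtype.ext
        funext i
        dsimp only
        rw [add_sub_cancel_left, mmInv_mm hMN hMpos]
    -- coefficient nonzero
    obtain ⟨j, hj⟩ := y.2.2
    have hcj : c j ≠ 0 := by
      have h2 : (2 : ZMod p) ≠ 0 := by
        have hne2 : p ≠ 2 := by rintro rfl; simp [Nat.odd_iff] at hodd
        have : ¬ (p ∣ 2) := fun hdvd =>
          hne2 ((Nat.prime_dvd_prime_iff_eq hp Nat.prime_two).mp hdvd)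
        intro h0
        rw [show (2 : ZMod p) = ((2 : ℕ) : ZMod p) by norm_cast,
          ZMod.natCast_eq_zero_iff] at h0
        exact this h0
      have hcb : cbar j ≠ 0 := by
        rw [hcbar]
        intro h0
        rw [ZMod.natCast_eq_zero_iff] at h0
        exact hj h0
      exact mul_ne_zero h2 hcb
    rw [Nat.card_congr (E1.trans E2), nat_card_linear c j hcj d, ZMod.card]
  -- assemble via sigma decomposition
  haveI : Fintype B := Fintype.ofFinite B
  calc rhoP k lam p N = Nat.card A := rfl
    _ = Nat.card ((y : B) × {a : A // F a = y}) := (Nat.card_congr (Equiv.sigmaFiberEquiv F)).symm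
    _ = ∑ y : B, Nat.card {a : A // F a = y} := nat_card_sigma _
    _ = ∑ _y : B, p ^ (k - 1) := Finset.sum_congr rfl (fun y _ => hfiber y)
    _ = Fintype.card B * p ^ (k - 1) := by rw [Finset.sum_const, smul_eq_mul, Finset.card_univ]
    _ = p ^ (k - 1) * rhoP k lam p M := by
        rw [mul_comm, rhoP, Nat.card_eq_fintype_card]

lemma rhoP_iter (p : ℕ) (hp : p.Prime) (hodd : Odd p) (k : ℕ) (lam : ℤ) :
    ∀ t : ℕ, rhoP k lam p (p ^ (t + 1)) = p ^ (t * (k - 1)) * rhoP k lam p (p ^ 1) := by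
  intro t
  induction t with
  | zero => simp
  | succ t ih =>
      rw [rhoP_step p hp hodd k lam (t + 1) (by omega), ih]
      ring

lemma card_diff_zero {α : Type*} [Fintype α] [DecidableEq α] (P : α → Prop) (a : α) (ha : P a) :
    Nat.card {x // P x ∧ x ≠ a} = Nat.card {x // P x} - 1 := by
  classical
  rw [Nat.card_eq_fintype_card, Nat.card_eq_fintype_card, Fintype.card_subtype,
    Fintype.card_subtype]
  have h1 : Finset.filter (fun x => P x ∧ x ≠ a) Finset.univ
      = (Finset.filter (fun x => P x) Finset.univ).erase a := by
    ext x; simp [Finset.mem_erase, and_comm]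
  rw [h1, Finset.card_erase_of_mem (by simp [ha])]

lemma rhoP_base (p : ℕ) (hp : p.Prime) (k : ℕ) (lam : ℤ) (hdvd : (p : ℤ) ∣ lam) :
    rhoP k lam p p = rho k 0 p - 1 := by
  haveI : NeZero p := ⟨hp.pos.ne'⟩
  have hlamz : ((lam : ZMod p)) = 0 := (ZMod.intCast_zmod_eq_zero_iff_dvd lam p).mpr hdvd
  have hprim : ∀ x : Fin k → ZMod p, (∃ i, ¬ p ∣ (x i).val) ↔ x ≠ 0 := by
    intro x
    rw [Function.ne_iff]
    refine exists_congr (fun i => ?_)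
    constructor
    · intro h h0
      exact h (by rw [show x i = (0 : Fin k → ZMod p) i from h0]; simp)
    · intro h hdvd2
      have := ZMod.val_lt (x i)
      have hv : (x i).val = 0 := Nat.eq_zero_of_dvd_of_lt hdvd2 this
      exact h ((ZMod.val_eq_zero _).mp hv)
  have E : {x : Fin k → ZMod p // (∑ i, x i ^ 2 = (lam : ZMod p)) ∧ ∃ i, ¬ p ∣ (x i).val}
      ≃ {x : Fin k → ZMod p // (∑ i, x i ^ 2 = ((0 : ℤ) : ZMod p)) ∧ x ≠ 0} := by
    refine Equiv.subtypeEquivRight (fun x => ?_)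
    rw [hlamz, hprim x]
    norm_num
  rw [rhoP, Nat.card_congr E, rho]
  exact card_diff_zero _ 0 (by simp)

lemma rhoP_value (p : ℕ) (hp : p.Prime) (hodd : Odd p) (k : ℕ) (lam : ℤ)
    (hdvd : (p : ℤ) ∣ lam) (s : ℕ) (hs : 1 ≤ s) :
    rhoP k lam p (p ^ s) = p ^ ((s - 1) * (k - 1)) * (rho k 0 p - 1) := by
  obtain ⟨t, rfl⟩ : ∃ t, s = t + 1 := ⟨s - 1, by omega⟩
  rw [rhoP_iter p hp hodd k lam t, pow_one, rhoP_base p hp k lam hdvd]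
  simp

lemma card_split_s14 {α : Type*} [Finite α] (A B : α → Prop) :
    Nat.card {x // A x} = Nat.card {x // A x ∧ B x} + Nat.card {x // A x ∧ ¬ B x} := by
  classical
  haveI : Fintype α := Fintype.ofFinite α
  rw [Nat.card_eq_fintype_card, Nat.card_eq_fintype_card, Nat.card_eq_fintype_card,
    Fintype.card_subtype, Fintype.card_subtype, Fintype.card_subtype]
  rw [show (Finset.filter (fun x => A x ∧ B x) Finset.univ)
      = (Finset.filter A Finset.univ).filter B by rw [Finset.filter_filter],
    show (Finset.filter (fun x => A x ∧ ¬ B x) Finset.univ)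
      = (Finset.filter A Finset.univ).filter (fun x => ¬ B x) by rw [Finset.filter_filter]]
  exact (Finset.card_filter_add_card_filter_not B).symm

lemma nonprim_empty (p : ℕ) (hp : p.Prime) (k : ℕ) (s : ℕ) (hs : 2 ≤ s)
    (lam lam' : ℤ) (hfac : lam = p * lam') (hnd : ¬ (p : ℤ) ∣ lam') :
    Nat.card {x : Fin k → ZMod (p ^ s) //
      (∑ i, x i ^ 2 = (lam : ZMod (p ^ s))) ∧ ¬ ∃ i, ¬ p ∣ (x i).val} = 0 := by
  haveI : NeZero (p ^ s) := ⟨pow_ne_zero _ hp.pos.ne'⟩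
  rw [Nat.card_eq_zero]
  left
  constructor
  rintro ⟨x, hsol, hall⟩
  push_neg at hall
  have hd2 : p ^ 2 ∣ p ^ s := pow_dvd_pow p hs
  set π2 := ZMod.castHom hd2 (ZMod (p ^ 2)) with hπ2
  have hsq : ∀ i, (π2 (x i)) ^ 2 = 0 := by
    intro i
    obtain ⟨c, hc⟩ := hall i
    rw [hπ2, val_castHom_eq hd2, hc]
    push_cast
    calc ((p : ZMod (p ^ 2)) * c) ^ 2 = ((p ^ 2 : ℕ) : ZMod (p ^ 2)) * (c : ZMod (p^2)) ^ 2 := by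
          push_cast; ring
      _ = 0 := by rw [ZMod.natCast_self, zero_mul]
  have hlam2 : (lam : ZMod (p ^ 2)) = 0 := by
    have := congrArg π2 hsol
    rw [map_sum, map_intCast] at this
    rw [← this]
    calc ∑ i, π2 (x i ^ 2) = ∑ i, (π2 (x i)) ^ 2 := by
          exact Finset.sum_congr rfl (fun i _ => map_pow π2 (x i) 2)
      _ = 0 := by simp [hsq]
  rw [ZMod.intCast_zmod_eq_zero_iff_dvd] at hlam2
  apply hnd
  have hp0 : (p : ℤ) ≠ 0 := Int.natCast_ne_zero.mpr hp.pos.ne'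
  obtain ⟨c, hc⟩ := hlam2
  refine ⟨c, ?_⟩
  have : (p : ℤ) * lam' = (p : ℤ) * ((p : ℤ) * c) := by
    rw [← hfac, hc]; push_cast; ring
  exact mul_left_cancel₀ hp0 this

lemma nonprim_count (p : ℕ) (hp : p.Prime) (k : ℕ) (s : ℕ) (hs : 2 ≤ s) (mu : ℤ) :
    Nat.card {x : Fin k → ZMod (p ^ s) //
      (∑ i, x i ^ 2 = (((p : ℤ) ^ 2 * mu : ℤ) : ZMod (p ^ s))) ∧ ¬ ∃ i, ¬ p ∣ (x i).val}
      = p ^ k * rho k mu (p ^ (s - 2)) := by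
  haveI : NeZero p := ⟨hp.pos.ne'⟩
  haveI : NeZero (p ^ s) := ⟨pow_ne_zero _ hp.pos.ne'⟩
  haveI : NeZero (p ^ (s - 1)) := ⟨pow_ne_zero _ hp.pos.ne'⟩
  haveI : NeZero (p ^ (s - 2)) := ⟨pow_ne_zero _ hp.pos.ne'⟩
  set N := p ^ s
  set n := p ^ (s - 1)
  set n2 := p ^ (s - 2)
  have h1 : p * n = N := by rw [← pow_succ']; congr 1; omega
  have h2 : (p * p) * n2 = N := by
    rw [show p * p * n2 = p ^ (2 + (s - 2)) by rw [pow_add]; ring]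
    congr 1; omega
  have hdn2n : n2 ∣ n := pow_dvd_pow p (by omega)
  have hdn2N : n2 ∣ N := pow_dvd_pow p (by omega)
  have hdpN : p ∣ N := dvd_pow_self p (by omega)
  have hppos : 0 < p := hp.pos
  set π2 := ZMod.castHom hdn2n (ZMod n2) with hπ2
  -- condition transport
  have hkey : ∀ y : Fin k → ZMod n,
      (∑ i, (mm p N (y i)) ^ 2 = (((p : ℤ) ^ 2 * mu : ℤ) : ZMod N))
        ↔ (∑ i, (π2 (y i)) ^ 2 = (mu : ZMod n2)) := by
    intro y
    have hL : ∑ i, (mm p N (y i)) ^ 2 = mm (p * p) N (∑ i, (π2 (y i)) ^ 2) := by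
      calc ∑ i, (mm p N (y i)) ^ 2 = ∑ i, mm (p * p) N ((π2 (y i)) ^ 2) := by
            refine Finset.sum_congr rfl (fun i _ => ?_)
            rw [sq, sq, mm_mul_mm h2 hdn2n]
        _ = mm (p * p) N (∑ i, (π2 (y i)) ^ 2) :=
            (map_sum (mmHom h2) (fun i => (π2 (y i)) ^ 2) univ).symm
    have hR : (((p : ℤ) ^ 2 * mu : ℤ) : ZMod N) = mm (p * p) N ((mu : ZMod n2)) := by
      have e1 : (((p : ℤ) ^ 2 * mu : ℤ) : ZMod N) = ((p * p : ℕ) : ZMod N) * ((mu : ℤ) : ZMod N) := by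
        push_cast; ring
      rw [e1, mm_elem h2]
      congr 1
      rw [← val_castHom_eq hdn2N, map_intCast]
    rw [hL, hR]
    constructor
    · exact fun h => mm_inj h2 (by positivity) h
    · intro h; rw [h]
  -- equivalence with y-space
  have E1 : {x : Fin k → ZMod N //
        (∑ i, x i ^ 2 = (((p : ℤ) ^ 2 * mu : ℤ) : ZMod N)) ∧ ¬ ∃ i, ¬ p ∣ (x i).val}
      ≃ {y : Fin k → ZMod n // ∑ i, (π2 (y i)) ^ 2 = (mu : ZMod n2)} := by
    refine ⟨fun x => ⟨fun i => mmInv p n (x.1 i), ?_⟩,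
      fun y => ⟨fun i => mm p N (y.1 i), ?_, ?_⟩, ?_, ?_⟩
    · have hall : ∀ i, p ∣ (x.1 i).val := by have := x.2.2; push_neg at this; exact this
      have hmminv : ∀ i, mm p N (mmInv p n (x.1 i)) = x.1 i := by
        intro i
        refine mm_mmInv h1 hppos _ ?_
        rw [ZMod.natCast_eq_zero_iff]
        exact hall i
      rw [← hkey]
      calc ∑ i, (mm p N (mmInv p n (x.1 i))) ^ 2 = ∑ i, (x.1 i) ^ 2 := by
            exact Finset.sum_congr rfl (fun i _ => by rw [hmminv i])
        _ = _ := x.2.1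
    · exact (hkey y.1).mpr y.2
    · push_neg
      intro i
      have : mm p N (y.1 i) = ((p * (y.1 i).val : ℕ) : ZMod N) := by rw [mm]; push_cast; rfl
      rw [this, ZMod.val_natCast]
      exact (Nat.dvd_mod_iff hdpN).mpr ⟨(y.1 i).val, rfl⟩
    · intro x
      apply Subtype.ext
      funext i
      dsimp only
      have hall : ∀ i, p ∣ (x.1 i).val := by have := x.2.2; push_neg at this; exact this
      exact mm_mmInv h1 hppos _ (by rw [ZMod.natCast_eq_zero_iff]; exact hall i)
    · intro y
      apply Subtype.ext
      funext i
      dsimp only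
      exact mmInv_mm h1 hppos _
  rw [Nat.card_congr E1]
  -- fiberwise count over solutions mod p^(s-2)
  set U := {y : Fin k → ZMod n // ∑ i, (π2 (y i)) ^ 2 = (mu : ZMod n2)} with hU
  set V := {w : Fin k → ZMod n2 // ∑ i, w i ^ 2 = (mu : ZMod n2)} with hV
  set G : U → V := fun y => ⟨fun i => π2 (y.1 i), y.2⟩ with hG
  have hfiber : ∀ w : V, Nat.card {a : U // G a = w} = p ^ k := by
    intro w
    have E2 : {a : U // G a = w} ≃ {y : Fin k → ZMod n // ∀ i, π2 (y i) = w.1 i} := by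
      refine ⟨fun a => ⟨a.1.1, fun i => ?_⟩, fun y => ⟨⟨y.1, ?_⟩, ?_⟩, ?_, ?_⟩
      · exact congrFun (congrArg Subtype.val a.2) i
      · calc ∑ i, (π2 (y.1 i)) ^ 2 = ∑ i, (w.1 i) ^ 2 := by
              exact Finset.sum_congr rfl (fun i _ => by rw [y.2 i])
          _ = (mu : ZMod n2) := w.2
      · apply Subtype.ext
        show (fun i => π2 (y.1 i)) = w.1
        funext i
        exact y.2 i
      · intro a; apply Subtype.ext; apply Subtype.ext; rfl
      · intro y; apply Subtype.ext; rfl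
    have E3 : {y : Fin k → ZMod n // ∀ i, π2 (y i) = w.1 i}
        ≃ ∀ i : Fin k, {z : ZMod n // π2 z = w.1 i} :=
      Equiv.subtypePiEquivPi (p := fun i z => π2 z = w.1 i)
    have h12 : n2 * p = n := by rw [← pow_succ]; congr 1; omega
    have E4 : (∀ i : Fin k, {z : ZMod n // π2 z = w.1 i}) ≃ (Fin k → ZMod p) := by
      refine Equiv.piCongrRight (fun i => ?_)
      exact (fiberEquiv h12 hdn2n (w.1 i)).symm
    rw [Nat.card_congr ((E2.trans E3).trans E4), Nat.card_eq_fintype_card,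
      Fintype.card_fun, ZMod.card, Fintype.card_fin]
  haveI : Fintype V := Fintype.ofFinite V
  calc Nat.card U = Nat.card ((w : V) × {a : U // G a = w}) :=
        (Nat.card_congr (Equiv.sigmaFiberEquiv G)).symm
    _ = ∑ w : V, Nat.card {a : U // G a = w} := nat_card_sigma _
    _ = ∑ _w : V, p ^ k := Finset.sum_congr rfl (fun w _ => hfiber w)
    _ = Fintype.card V * p ^ k := by rw [Finset.sum_const, smul_eq_mul, Finset.card_univ]
    _ = p ^ k * rho k mu (p ^ (s - 2)) := by
        rw [mul_comm, rho, Nat.card_eq_fintype_card]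

lemma sum_shift (p k s j : ℕ) (hs : 2 * j + 3 < s + 1) :
    ∑ i ∈ Finset.range (j + 2), p ^ (k * i + (s - 2 * i - 1) * (k - 1))
      = p ^ ((s - 1) * (k - 1))
        + p ^ k * ∑ i ∈ Finset.range (j + 1), p ^ (k * i + ((s - 2) - 2 * i - 1) * (k - 1)) := by
  rw [Finset.sum_range_succ']
  have h0 : k * 0 + (s - 2 * 0 - 1) * (k - 1) = (s - 1) * (k - 1) := by
    simp
  rw [h0, add_comm, Finset.mul_sum]
  congr 1
  refine Finset.sum_congr rfl (fun i hi => ?_)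
  have he : s - 2 * (i + 1) - 1 = (s - 2) - 2 * i - 1 := by omega
  rw [he, ← pow_add]
  congr 1
  have : k * (i + 1) = k * i + k := by ring
  rw [this]
  ring

lemma main_aux (p : ℕ) (hp : p.Prime) (hodd : Odd p) (k : ℕ) :
    ∀ j s : ℕ, ∀ lam' : ℤ, ¬ (p : ℤ) ∣ lam' → 2 * j + 1 < s →
      rho k ((p : ℤ) ^ (2 * j + 1) * lam') (p ^ s)
        = (∑ i ∈ Finset.range (j + 1), p ^ (k * i + (s - 2 * i - 1) * (k - 1)))
            * (rho k 0 p - 1) := by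
  intro j
  induction j with
  | zero =>
      intro s lam' hnd hs
      haveI : NeZero (p ^ s) := ⟨pow_ne_zero _ hp.pos.ne'⟩
      have hs2 : 2 ≤ s := by omega
      have hs1 : 1 ≤ s := by omega
      set lam := (p : ℤ) ^ (2 * 0 + 1) * lam' with hlam
      have hsplit := card_split_s14 (α := Fin k → ZMod (p ^ s))
        (fun x => ∑ i, x i ^ 2 = (lam : ZMod (p ^ s))) (fun x => ∃ i, ¬ p ∣ (x i).val)
      have hzero : Nat.card {x : Fin k → ZMod (p ^ s) //
          (∑ i, x i ^ 2 = (lam : ZMod (p ^ s))) ∧ ¬ ∃ i, ¬ p ∣ (x i).val} = 0 :=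
        nonprim_empty p hp k s hs2 lam lam' (by rw [hlam]; push_cast; ring) hnd
      have hval : rhoP k lam p (p ^ s) = p ^ ((s - 1) * (k - 1)) * (rho k 0 p - 1) :=
        rhoP_value p hp hodd k lam ⟨lam', by rw [hlam]; push_cast; ring⟩ s hs1
      have : rho k lam (p ^ s) = rhoP k lam p (p ^ s) := by
        rw [rho, hsplit, hzero, add_zero]; rfl
      rw [this, hval, Finset.sum_range_one]
      simp
  | succ j ih =>
      intro s lam' hnd hs
      haveI : NeZero (p ^ s) := ⟨pow_ne_zero _ hp.pos.ne'⟩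
      have hs2 : 2 ≤ s := by omega
      have hs1 : 1 ≤ s := by omega
      have hsih : 2 * j + 1 < s - 2 := by omega
      have hshift : 2 * j + 3 < s + 1 := by omega
      set mu := (p : ℤ) ^ (2 * j + 1) * lam' with hmu
      have hfac2 : (p : ℤ) ^ (2 * (j + 1) + 1) * lam' = (p : ℤ) ^ 2 * mu := by
        rw [hmu, show (p : ℤ) ^ (2 * (j + 1) + 1) = (p : ℤ) ^ 2 * (p : ℤ) ^ (2 * j + 1) by
          rw [← pow_add]; congr 1; omega]
        ring
      rw [hfac2]
      have hsplit := card_split_s14 (α := Fin k → ZMod (p ^ s))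
        (fun x => ∑ i, x i ^ 2 = (((p : ℤ) ^ 2 * mu : ℤ) : ZMod (p ^ s)))
        (fun x => ∃ i, ¬ p ∣ (x i).val)
      have hnp := nonprim_count p hp k s hs2 mu
      have hval : rhoP k ((p : ℤ) ^ 2 * mu) p (p ^ s)
          = p ^ ((s - 1) * (k - 1)) * (rho k 0 p - 1) :=
        rhoP_value p hp hodd k _ ⟨(p : ℤ) * mu, by ring⟩ s hs1
      have hih : rho k mu (p ^ (s - 2))
          = (∑ i ∈ Finset.range (j + 1), p ^ (k * i + ((s - 2) - 2 * i - 1) * (k - 1)))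
              * (rho k 0 p - 1) := ih (s - 2) lam' hnd hsih
      have hcomb : rho k ((p : ℤ) ^ 2 * mu) (p ^ s)
          = rhoP k ((p : ℤ) ^ 2 * mu) p (p ^ s) + p ^ k * rho k mu (p ^ (s - 2)) := by
        rw [rho, hsplit, hnp]; rfl
      rw [hcomb, hval, hih,
        show j + 1 + 1 = j + 2 from rfl,
        sum_shift p k s j hshift]
      ring

/-- For an odd prime `p` and `λ = p^r·λ'` with `p ∤ λ'` and `r` odd,
`ρ_{k,λ}(p^s) = (Σ_{i=0}^{(r−1)/2} p^{ki+(s−2i−1)(k−1)}) · (ρ_{k,0}(p) − 1)`. -/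
theorem rho_odd_prime_pow_r_odd (p : ℕ) (hp : p.Prime) (hodd : Odd p) (k : ℕ) (hk : 0 < k)
    (s : ℕ) (hs : 1 ≤ s) (lam : ℤ) (hlam0 : 0 < lam) (hlam1 : lam < (p : ℤ) ^ s)
    (r : ℕ) (lam' : ℤ) (hr : r < s) (hfac : lam = (p : ℤ) ^ r * lam')
    (hnd : ¬ (p : ℤ) ∣ lam') (hrodd : Odd r) :
    rho k lam (p ^ s) =
      (∑ i ∈ Finset.range ((r - 1) / 2 + 1), p ^ (k * i + (s - 2 * i - 1) * (k - 1))) *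
        (rho k 0 p - 1) := by
  obtain ⟨j, hj⟩ := hrodd
  subst hj
  have hdiv : (2 * j + 1 - 1) / 2 = j := by omega
  rw [hfac, hdiv]
  exact main_aux p hp hodd k j s lam' hnd hr
end
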